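/- Let f : S¹ → S¹ be rotation by an angle irrationally related to 2π, fix x ∈ S¹, and for ε > 0 and N ∈ ℕ let N₁(ε, N) be the number of integers n ∈ [0, N] with fⁿ(x) in the ε-ball around a fixed point z ∈ S¹. Then the frequency ν_ε(z) = lim_{N→∞} N₁(ε, N)/N exists and equals the normalized length of the ε-ball, namely ε/π (for ε < π, measuring S¹ with total length 2π). -/

import Mathlib

open Real Filter
open scoped Classical
open MeasureTheory AddCircle Finset

instance : Fact (0 < 2*π) := ⟨by positivity⟩

lemma fourier_ne_one {α : ℝ} (hirr : ∀ q : ℚ, α ≠ (q : ℝ) * (2 * π))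
    {k : ℤ} (hk : k ≠ 0) :
    (fourier k ((α : ℝ) : AddCircle (2*π)) : ℂ) ≠ 1 := by
  rw [fourier_coe_apply]
  intro h
  rw [Complex.exp_eq_one_iff] at h
  obtain ⟨n, hn⟩ := h
  have h2 : ((2:ℂ) * (π:ℂ)) ≠ 0 := by simp [Real.pi_ne_zero]
  have h2I : ((2:ℂ) * (π:ℂ) * Complex.I) ≠ 0 := mul_ne_zero h2 Complex.I_ne_zero
  field_simp at hn
  have h3 : ((2:ℂ)*(π:ℂ)*Complex.I) * ((k:ℂ)*(α:ℂ)) =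
      ((2:ℂ)*(π:ℂ)*Complex.I) * ((n:ℂ)*(2*(π:ℂ))) := by push_cast at hn; linear_combination (2*(π:ℂ)*Complex.I) * hn
  have h4 := mul_left_cancel₀ h2I h3
  have h5 : (k : ℝ) * α = (n : ℝ) * (2 * π) := by exact_mod_cast h4
  have hk' : (k : ℝ) ≠ 0 := Int.cast_ne_zero.mpr hk
  apply hirr ((n : ℚ) / (k : ℚ))
  have : ((↑((n:ℚ)/(k:ℚ)) : ℝ)) = (n:ℝ)/(k:ℝ) := by push_cast; ring
  rw [this]
  field_simp
  linarith [h5]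

lemma integral_fourier_eq_zero {k : ℤ} (hk : k ≠ 0) :
    ∫ y, (fourier k y : ℂ) ∂(haarAddCircle (T := 2*π)) = 0 := by
  have h := MeasureTheory.integral_add_right_eq_self
    (μ := haarAddCircle (T := 2*π)) (fun y => (fourier k y : ℂ))
    ((((2*π) / 2 / (k:ℝ)) : ℝ) : AddCircle (2*π))
  simp only [fourier_add_half_inv_index hk Real.two_pi_pos] at h
  rw [integral_neg] at h
  linear_combination -h/2

lemma fourier_nsmul' {T : ℝ} (k : ℤ) (m : ℕ) (a : AddCircle T) :
    (fourier k (m • a) : ℂ) = (fourier k a : ℂ) ^ m := by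
  induction m with
  | zero => simp
  | succ n ih =>
    rw [succ_nsmul, fourier_apply, smul_add, toCircle_add, pow_succ, ← ih,
      fourier_apply, fourier_apply]
    push_cast; ring

lemma fourier_arg_add' {T : ℝ} (k : ℤ) (a b : AddCircle T) :
    (fourier k (a + b) : ℂ) = fourier k a * fourier k b := by
  rw [fourier_apply, smul_add, toCircle_add, fourier_apply, fourier_apply]
  push_cast; ring


lemma avg_fourier {α : ℝ} (hirr : ∀ q : ℚ, α ≠ (q : ℝ) * (2 * π))
    (x : AddCircle (2*π)) (k : ℤ) :
    Tendsto (fun M : ℕ => (∑ m ∈ range M,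
        (fourier k (x + m • ((α : ℝ) : AddCircle (2*π))) : ℂ)) / M)
      atTop (nhds (∫ y, (fourier k y : ℂ) ∂(haarAddCircle (T := 2*π)))) := by
  rcases eq_or_ne k 0 with rfl | hk
  · simp only [fourier_zero]
    rw [MeasureTheory.integral_const]
    simp only [measure_univ, probReal_univ, ENNReal.toReal_one, one_smul, Finset.sum_const,
      Finset.card_range, nsmul_eq_mul, mul_one]
    have : ∀ᶠ M : ℕ in atTop, ((M : ℂ)) / (M : ℂ) = 1 := by
      filter_upwards [eventually_ge_atTop 1] with M hM
      rw [div_self]; exact_mod_cast Nat.one_le_iff_ne_zero.mp hM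
    exact Tendsto.congr' (by filter_upwards [this] with M h using h.symm) tendsto_const_nhds
  · set c : ℂ := (fourier k ((α : ℝ) : AddCircle (2*π)) : ℂ) with hc
    have hc1 : c ≠ 1 := fourier_ne_one hirr hk
    rw [integral_fourier_eq_zero hk]
    have hsum : ∀ M : ℕ, (∑ m ∈ range M,
        (fourier k (x + m • ((α : ℝ) : AddCircle (2*π))) : ℂ))
        = fourier k x * ((c ^ M - 1) / (c - 1)) := by
      intro M
      rw [← geom_sum_eq hc1, Finset.mul_sum]
      refine Finset.sum_congr rfl fun m _ => ?_
      rw [fourier_arg_add', fourier_nsmul']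
    have hnorm : ∀ y : AddCircle (2*π), ‖(fourier k y : ℂ)‖ = 1 := by
      intro y; rw [fourier_apply]; exact Circle.norm_coe _
    have hbound : ∀ M : ℕ, ‖(∑ m ∈ range M,
        (fourier k (x + m • ((α : ℝ) : AddCircle (2*π))) : ℂ)) / M‖
        ≤ (2 / ‖c - 1‖) / M := by
      intro M
      have h1 : ‖c ^ M - 1‖ ≤ 2 := by
        calc ‖c ^ M - 1‖ ≤ ‖c ^ M‖ + ‖(1:ℂ)‖ := norm_sub_le _ _
          _ = 2 := by rw [norm_pow, hnorm, one_pow, norm_one]; norm_num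
      have hcpos : 0 < ‖c - 1‖ := norm_pos_iff.mpr (sub_ne_zero.mpr hc1)
      rw [hsum, norm_div, norm_mul, hnorm, one_mul, norm_div, Complex.norm_natCast]
      rcases Nat.eq_zero_or_pos M with rfl | hM
      · simp
      · have hMpos : (0:ℝ) < M := by exact_mod_cast hM
        exact div_le_div_of_nonneg_right ((div_le_div_iff_of_pos_right hcpos).mpr h1) hMpos.le
    exact squeeze_zero_norm hbound (tendsto_const_div_atTop_nhds_zero_nat _)

lemma cm_integrable (g : C(AddCircle (2*π), ℂ)) :
    Integrable g (haarAddCircle (T := 2*π)) :=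
  g.continuous.integrable_of_hasCompactSupport (HasCompactSupport.of_compactSpace g)

lemma avg_span {α : ℝ} (hirr : ∀ q : ℚ, α ≠ (q : ℝ) * (2 * π))
    (x : AddCircle (2*π)) (p : C(AddCircle (2*π), ℂ))
    (hp : p ∈ Submodule.span ℂ (Set.range (@fourier (2*π)))) :
    Tendsto (fun M : ℕ => (∑ m ∈ range M,
        p (x + m • ((α : ℝ) : AddCircle (2*π)))) / M)
      atTop (nhds (∫ y, p y ∂(haarAddCircle (T := 2*π)))) := by
  induction hp using Submodule.span_induction with
  | mem g hg => obtain ⟨k, rfl⟩ := hg; exact avg_fourier hirr x k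
  | zero => simp [tendsto_const_nhds]
  | add g h _ _ hg hh =>
    have := hg.add hh
    simp only [← integral_add (cm_integrable _) (cm_integrable _)] at this
    refine this.congr fun M => ?_
    simp [Finset.sum_add_distrib, add_div]
  | smul c g _ hg =>
    simp only [ContinuousMap.smul_apply, smul_eq_mul]
    have h2 := hg.const_mul c
    rw [← integral_const_mul] at h2
    refine Tendsto.congr (fun M => ?_) h2
    rw [← Finset.mul_sum, mul_div_assoc]

lemma avg_cont {α : ℝ} (hirr : ∀ q : ℚ, α ≠ (q : ℝ) * (2 * π))
    (x : AddCircle (2*π)) (g : C(AddCircle (2*π), ℂ)) :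
    Tendsto (fun M : ℕ => (∑ m ∈ range M,
        g (x + m • ((α : ℝ) : AddCircle (2*π)))) / M)
      atTop (nhds (∫ y, g y ∂(haarAddCircle (T := 2*π)))) := by
  set A : AddCircle (2*π) := ((α : ℝ) : AddCircle (2*π))
  rw [Metric.tendsto_atTop]
  intro η hη
  -- find p in the span with ‖g - p‖ < η/3
  have hdense : g ∈ closure ((Submodule.span ℂ (Set.range (@fourier (2*π)))) : Set _) := by
    have := span_fourier_closure_eq_top (T := 2*π)
    rw [← Submodule.topologicalClosure_coe, this]
    trivial
  rw [Metric.mem_closure_iff] at hdense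
  obtain ⟨p, hpmem, hpdist⟩ := hdense (η/3) (by linarith)
  set D := dist g p with hD
  have hptw : ∀ y : AddCircle (2*π), ‖g y - p y‖ ≤ D := by
    intro y
    rw [← dist_eq_norm]
    exact ContinuousMap.dist_apply_le_dist y
  have hp := avg_span hirr x p hpmem
  rw [Metric.tendsto_atTop] at hp
  obtain ⟨N₀, hN₀⟩ := hp (η/3) (by linarith)
  refine ⟨N₀, fun M hM => ?_⟩
  have havg : dist ((∑ m ∈ range M, g (x + m • A)) / M)
      ((∑ m ∈ range M, p (x + m • A)) / M) ≤ D := by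
    rw [dist_eq_norm, div_sub_div_same, ← Finset.sum_sub_distrib, norm_div,
      Complex.norm_natCast]
    rcases Nat.eq_zero_or_pos M with rfl | hMpos
    · simp only [Nat.cast_zero, div_zero]; exact dist_nonneg
    · rw [div_le_iff₀ (by exact_mod_cast hMpos)]
      calc ‖∑ m ∈ range M, (g (x + m • A) - p (x + m • A))‖
          ≤ ∑ m ∈ range M, ‖g (x + m • A) - p (x + m • A)‖ := norm_sum_le _ _
        _ ≤ ∑ _m ∈ range M, D := Finset.sum_le_sum fun m _ => hptw _
        _ = M * D := by rw [Finset.sum_const, Finset.card_range, nsmul_eq_mul]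
        _ = D * M := mul_comm _ _
  have hint : dist (∫ y, p y ∂(haarAddCircle (T := 2*π)))
      (∫ y, g y ∂(haarAddCircle (T := 2*π))) ≤ D := by
    rw [dist_eq_norm, ← integral_sub (cm_integrable p) (cm_integrable g)]
    calc ‖∫ y, (p y - g y) ∂(haarAddCircle (T := 2*π))‖
        ≤ D * ((haarAddCircle (T := 2*π)) Set.univ).toReal :=
          norm_integral_le_of_norm_le_const (Filter.Eventually.of_forall
            (fun y => by rw [norm_sub_rev]; exact hptw y))
      _ = D := by simp
  have h3 := hN₀ M hM
  calc dist ((∑ m ∈ range M, g (x + m • A)) / (M:ℂ))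
        (∫ y, g y ∂(haarAddCircle (T := 2*π)))
      ≤ dist ((∑ m ∈ range M, g (x + m • A)) / (M:ℂ))
          ((∑ m ∈ range M, p (x + m • A)) / (M:ℂ))
        + dist ((∑ m ∈ range M, p (x + m • A)) / (M:ℂ))
            (∫ y, p y ∂(haarAddCircle (T := 2*π)))
        + dist (∫ y, p y ∂(haarAddCircle (T := 2*π)))
            (∫ y, g y ∂(haarAddCircle (T := 2*π))) := dist_triangle4 _ _ _ _
    _ < η := by linarith

lemma iter_add {G : Type*} [AddCommMonoid G] (a x : G) (m : ℕ) :
    (fun y => y + a)^[m] x = x + m • a := by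
  induction m with
  | zero => simp
  | succ n ih => rw [Function.iterate_succ_apply', ih, succ_nsmul, add_assoc]


lemma cm_integrable_real (g : C(AddCircle (2*π), ℝ)) :
    Integrable g (haarAddCircle (T := 2*π)) :=
  g.continuous.integrable_of_hasCompactSupport (HasCompactSupport.of_compactSpace g)

lemma avg_cont_real {α : ℝ} (hirr : ∀ q : ℚ, α ≠ (q : ℝ) * (2 * π))
    (x : AddCircle (2*π)) (g : C(AddCircle (2*π), ℝ)) :
    Tendsto (fun M : ℕ => (∑ m ∈ range M,
        g (x + m • ((α : ℝ) : AddCircle (2*π)))) / M)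
      atTop (nhds (∫ y, g y ∂(haarAddCircle (T := 2*π)))) := by
  set gC : C(AddCircle (2*π), ℂ) :=
    ⟨fun y => ((g y : ℝ) : ℂ), Complex.continuous_ofReal.comp g.continuous⟩ with hgC
  have h := avg_cont hirr x gC
  have hfun : ∀ M : ℕ, (∑ m ∈ range M,
      gC (x + m • ((α : ℝ) : AddCircle (2*π)))) / M
      = (((∑ m ∈ range M, g (x + m • ((α : ℝ) : AddCircle (2*π)))) / M : ℝ) : ℂ) := by
    intro M
    push_cast
    rfl
  have hint : ∫ y, gC y ∂(haarAddCircle (T := 2*π))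
      = ((∫ y, g y ∂(haarAddCircle (T := 2*π)) : ℝ) : ℂ) := integral_ofReal
  rw [hint] at h
  have h2 := (Complex.continuous_re.tendsto _).comp h
  refine h2.congr fun M => ?_
  show ((∑ m ∈ range M, gC (x + m • ((α : ℝ) : AddCircle (2*π)))) / M : ℂ).re = _
  rw [hfun M, Complex.ofReal_re]

lemma haar_cb (z : AddCircle (2*π)) (r : ℝ) (h0 : 0 ≤ r) (h1 : r ≤ π) :
    ((haarAddCircle (T := 2*π)) (Metric.closedBall z r)).toReal = r / π := by
  have hv : volume (Metric.closedBall z r) = ENNReal.ofReal (2*r) := by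
    rw [AddCircle.volume_closedBall]
    congr 1
    rw [min_eq_right]
    linarith
  have h2 : ENNReal.ofReal (2*π) * (haarAddCircle (T := 2*π)) (Metric.closedBall z r)
      = ENNReal.ofReal (2*r) := by
    rw [← hv, volume_eq_smul_haarAddCircle, Measure.smul_apply, smul_eq_mul]
  have h3 := congrArg ENNReal.toReal h2
  rw [ENNReal.toReal_mul, ENNReal.toReal_ofReal (by positivity),
    ENNReal.toReal_ofReal (by linarith)] at h3
  have hπ : (2:ℝ)*π ≠ 0 := by positivity
  field_simp at h3 ⊢
  linarith

lemma integral_ge_cb (g : C(AddCircle (2*π), ℝ)) (z : AddCircle (2*π)) (r : ℝ)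
    (hg1 : ∀ y ∈ Metric.closedBall z r, 1 ≤ g y) (hg0 : ∀ y, 0 ≤ g y) :
    ((haarAddCircle (T := 2*π)) (Metric.closedBall z r)).toReal
      ≤ ∫ y, g y ∂(haarAddCircle (T := 2*π)) := by
  have hind : ∫ y, (Metric.closedBall z r).indicator (fun _ => (1:ℝ)) y
        ∂(haarAddCircle (T := 2*π))
      = ((haarAddCircle (T := 2*π)) (Metric.closedBall z r)).toReal := by
    rw [integral_indicator_const (1:ℝ) Metric.isClosed_closedBall.measurableSet]
    simp [Measure.real]
  rw [← hind]
  refine integral_mono ((integrable_const (1:ℝ)).indicator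
    Metric.isClosed_closedBall.measurableSet) (cm_integrable_real g) fun y => ?_
  by_cases hy : y ∈ Metric.closedBall z r
  · simp [Set.indicator, hy, hg1 y hy]
  · simp [Set.indicator, hy, hg0 y]

lemma integral_le_cb (g : C(AddCircle (2*π), ℝ)) (z : AddCircle (2*π)) (r : ℝ)
    (hg1 : ∀ y, g y ≤ 1) (hg0 : ∀ y, y ∉ Metric.closedBall z r → g y ≤ 0) :
    ∫ y, g y ∂(haarAddCircle (T := 2*π))
      ≤ ((haarAddCircle (T := 2*π)) (Metric.closedBall z r)).toReal := by
  have hind : ∫ y, (Metric.closedBall z r).indicator (fun _ => (1:ℝ)) y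
        ∂(haarAddCircle (T := 2*π))
      = ((haarAddCircle (T := 2*π)) (Metric.closedBall z r)).toReal := by
    rw [integral_indicator_const (1:ℝ) Metric.isClosed_closedBall.measurableSet]
    simp [Measure.real]
  rw [← hind]
  refine integral_mono (cm_integrable_real g) ((integrable_const (1:ℝ)).indicator
    Metric.isClosed_closedBall.measurableSet) fun y => ?_
  by_cases hy : y ∈ Metric.closedBall z r
  · simp [Set.indicator, hy, hg1 y]
  · simp [Set.indicator, hy, hg0 y hy]

lemma SN_tendsto {α : ℝ} (hirr : ∀ q : ℚ, α ≠ (q : ℝ) * (2 * π))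
    (x : AddCircle (2*π)) (g : C(AddCircle (2*π), ℝ)) :
    Tendsto (fun N : ℕ => (∑ m ∈ range (N+1),
        g (x + m • ((α : ℝ) : AddCircle (2*π)))) / N)
      atTop (nhds (∫ y, g y ∂(haarAddCircle (T := 2*π)))) := by
  have h1 : Tendsto (fun N : ℕ => (∑ m ∈ range (N+1),
      g (x + m • ((α : ℝ) : AddCircle (2*π)))) / ((N:ℝ)+1))
      atTop (nhds (∫ y, g y ∂(haarAddCircle (T := 2*π)))) := by
    have := (avg_cont_real hirr x g).comp (tendsto_add_atTop_nat 1)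
    refine this.congr fun N => ?_
    simp only [Function.comp]
    push_cast
    rfl
  have h0 : Tendsto (fun N : ℕ => ((N:ℝ)+1)/N) atTop (nhds 1) := by
    have ht := tendsto_one_div_atTop_nhds_zero_nat (𝕜 := ℝ)
    have := tendsto_const_nhds (x := (1:ℝ)) (f := atTop (α := ℕ)) |>.add ht
    rw [add_zero] at this
    refine this.congr' ?_
    filter_upwards [eventually_ge_atTop 1] with N hN
    have hN0 : (N:ℝ) ≠ 0 := by
      exact_mod_cast Nat.one_le_iff_ne_zero.mp hN
    field_simp
  have hmul := h0.mul h1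
  rw [one_mul] at hmul
  refine hmul.congr fun N => ?_
  rcases Nat.eq_zero_or_pos N with rfl | hN
  · simp
  · have hN0 : (N:ℝ) ≠ 0 := by
      simpa using Nat.pos_iff_ne_zero.mp hN
    rw [div_mul_div_comm, mul_comm, mul_div_mul_right _ _ (by linarith : (N:ℝ)+1 ≠ 0)]

theorem irrational_rotation_equidistribution
    (α : ℝ) (hirr : ∀ q : ℚ, α ≠ (q : ℝ) * (2 * π))
    (x z : AddCircle (2 * π)) (ε : ℝ) (hε0 : 0 < ε) (hεπ : ε < π) :
    Tendsto
      (fun N : ℕ =>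
        (((Finset.range (N + 1)).filter
            (fun m => dist ((fun y => y + (α : AddCircle (2 * π)))^[m] x) z < ε)).card : ℝ) / N)
      atTop (nhds (ε / π)) := by
  set A : AddCircle (2*π) := ((α : ℝ) : AddCircle (2*π)) with hA
  have hπ : (0:ℝ) < π := Real.pi_pos
  have hcard : ∀ N : ℕ,
      (((Finset.range (N + 1)).filter
          (fun m => dist ((fun y => y + A)^[m] x) z < ε)).card : ℝ)
        = ∑ m ∈ range (N+1), (if dist (x + m • A) z < ε then (1:ℝ) else 0) := by
    intro N
    simp only [iter_add]
    rw [Finset.card_filter]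
    push_cast
    rfl
  rw [Metric.tendsto_atTop]
  intro η hη
  set δ : ℝ := min (ε/2) (min ((π - ε)/2) (π*η/4)) with hδ
  have hδ0 : 0 < δ := by
    apply lt_min (by linarith)
    apply lt_min (by linarith) (by positivity)
  have hδε : δ ≤ ε/2 := min_le_left _ _
  have hδπ : δ ≤ (π - ε)/2 := le_trans (min_le_right _ _) (min_le_left _ _)
  have hδη : δ ≤ π*η/4 := le_trans (min_le_right _ _) (min_le_right _ _)
  have hdc : Continuous fun y : AddCircle (2*π) => dist y z :=
    continuous_id.dist continuous_const
  set gl : C(AddCircle (2*π), ℝ) :=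
    ⟨fun y => min 1 (max 0 ((ε - dist y z)/δ)),
      continuous_const.min (continuous_const.max
        ((continuous_const.sub hdc).div_const δ))⟩ with hgl
  set gu : C(AddCircle (2*π), ℝ) :=
    ⟨fun y => min 1 (max 0 ((ε + δ - dist y z)/δ)),
      continuous_const.min (continuous_const.max
        ((continuous_const.sub hdc).div_const δ))⟩ with hgu
  -- pointwise properties
  have hgl0 : ∀ y, 0 ≤ gl y := fun y => le_min zero_le_one (le_max_left _ _)
  have hgl1 : ∀ y ∈ Metric.closedBall z (ε - δ), 1 ≤ gl y := by
    intro y hy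
    rw [Metric.mem_closedBall] at hy
    refine le_min le_rfl (le_max_of_le_right ?_)
    rw [le_div_iff₀ hδ0]
    linarith
  have hglle : ∀ y, gl y ≤ (if dist y z < ε then (1:ℝ) else 0) := by
    intro y
    by_cases hy : dist y z < ε
    · simp only [hy, if_true]
      exact min_le_left _ _
    · simp only [hy, if_false]
      push_neg at hy
      refine le_trans (min_le_right _ _) (max_le le_rfl ?_)
      apply div_nonpos_of_nonpos_of_nonneg (by linarith) hδ0.le
  have hgu1 : ∀ y, gu y ≤ 1 := fun y => min_le_left _ _
  have hgu0 : ∀ y, 0 ≤ gu y := fun y => le_min zero_le_one (le_max_left _ _)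
  have hgule : ∀ y, (if dist y z < ε then (1:ℝ) else 0) ≤ gu y := by
    intro y
    by_cases hy : dist y z < ε
    · simp only [hy, if_true]
      refine le_min le_rfl (le_max_of_le_right ?_)
      rw [le_div_iff₀ hδ0]
      linarith
    · simp only [hy, if_false]
      exact hgu0 y
  have hguout : ∀ y, y ∉ Metric.closedBall z (ε + δ) → gu y ≤ 0 := by
    intro y hy
    rw [Metric.mem_closedBall, not_le] at hy
    refine le_trans (min_le_right _ _) (max_le le_rfl ?_)
    apply div_nonpos_of_nonpos_of_nonneg (by linarith) hδ0.le
  -- integral bounds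
  have hIl : ε/π - η/4 ≤ ∫ y, gl y ∂(haarAddCircle (T := 2*π)) := by
    have h1 := integral_ge_cb gl z (ε - δ) hgl1 hgl0
    rw [haar_cb z (ε - δ) (by linarith) (by linarith)] at h1
    have hd : δ/π ≤ η/4 := by
      rw [div_le_iff₀ hπ]
      linarith [hδη]
    calc ε/π - η/4 ≤ ε/π - δ/π := by linarith
      _ = (ε - δ)/π := by ring
      _ ≤ _ := h1
  have hIu : (∫ y, gu y ∂(haarAddCircle (T := 2*π))) ≤ ε/π + η/4 := by
    have h1 := integral_le_cb gu z (ε + δ) hgu1 hguout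
    rw [haar_cb z (ε + δ) (by linarith) (by linarith)] at h1
    have hd : δ/π ≤ η/4 := by
      rw [div_le_iff₀ hπ]
      linarith [hδη]
    calc (∫ y, gu y ∂(haarAddCircle (T := 2*π))) ≤ (ε + δ)/π := h1
      _ = ε/π + δ/π := by ring
      _ ≤ ε/π + η/4 := by linarith
  -- convergence of the sandwich averages
  have hl := SN_tendsto hirr x gl
  have hu := SN_tendsto hirr x gu
  rw [Metric.tendsto_atTop] at hl hu
  obtain ⟨N₁, hN₁⟩ := hl (η/4) (by linarith)
  obtain ⟨N₂, hN₂⟩ := hu (η/4) (by linarith)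
  refine ⟨max N₁ N₂, fun N hN => ?_⟩
  have e₁ := hN₁ N (le_trans (le_max_left _ _) hN)
  have e₂ := hN₂ N (le_trans (le_max_right _ _) hN)
  rw [Real.dist_eq, abs_lt] at e₁ e₂
  -- sandwiching the counting function
  have hlow : (∑ m ∈ range (N+1), gl (x + m • A)) / N
      ≤ (∑ m ∈ range (N+1), (if dist (x + m • A) z < ε then (1:ℝ) else 0)) / N :=
    div_le_div_of_nonneg_right
      (Finset.sum_le_sum fun m _ => hglle _) (Nat.cast_nonneg N)
  have hup : (∑ m ∈ range (N+1), (if dist (x + m • A) z < ε then (1:ℝ) else 0)) / N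
      ≤ (∑ m ∈ range (N+1), gu (x + m • A)) / N :=
    div_le_div_of_nonneg_right
      (Finset.sum_le_sum fun m _ => hgule _) (Nat.cast_nonneg N)
  rw [Real.dist_eq, hcard N, abs_lt]
  constructor
  · linarith [e₁.1, hIl, hlow]
  · linarith [e₂.2, hIu, hup]
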